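/- Let G be a finite group, p a prime, P a Sylow p-subgroup of G, and x ∈ P. Then |x^G| ≤ |x^G ∩ P| · ν_p(G), with equality if and only if x lies in a unique Sylow p-subgroup of G. In particular, if x ∈ P lies in a unique Sylow p-subgroup of G, then |x^G| ≥ ν_p(G) · |x^P|. -/
import Mathlib


/-- for `x` in a Sylow `p`-subgroup `P` of a finite group `G`,
`|x^G| ≤ |x^G ∩ P| ⬝ ν_p(G)`, with equality iff `x` lies in a unique Sylow `p`-subgroup;
in particular, if `x` lies in a unique Sylow `p`-subgroup then `|x^G| ≥ ν_p(G) ⬝ |x^P|`. -/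
theorem conjClass_card_le_and_eq_iff_unique_sylow
    (p : ℕ) [Fact p.Prime] (G : Type*) [Group G] [Finite G]
    (P : Sylow p G) (x : G) (hx : x ∈ (P : Subgroup G)) :
    Nat.card {y : G // IsConj x y} ≤
      Nat.card {y : G // IsConj x y ∧ y ∈ (P : Subgroup G)} * Nat.card (Sylow p G) ∧
    (Nat.card {y : G // IsConj x y} =
        Nat.card {y : G // IsConj x y ∧ y ∈ (P : Subgroup G)} * Nat.card (Sylow p G) ↔
      ∃! Q : Sylow p G, x ∈ (Q : Subgroup G)) ∧
    ((∃! Q : Sylow p G, x ∈ (Q : Subgroup G)) →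
      Nat.card (Sylow p G) * Nat.card {y : G // ∃ g ∈ (P : Subgroup G), g * x * g⁻¹ = y} ≤
        Nat.card {y : G // IsConj x y}) := by
  classical
  letI : Fintype G := Fintype.ofFinite G
  letI : Fintype (Sylow p G) := Fintype.ofFinite _
  -- membership in a conjugated Sylow subgroup
  have hmem : ∀ (g : G) (Q : Sylow p G) (y : G),
      g * y * g⁻¹ ∈ ((g • Q : Sylow p G) : Subgroup G) ↔ y ∈ (Q : Subgroup G) := by
    intro g Q y
    rw [Sylow.coe_subgroup_smul, Subgroup.mem_pointwise_smul_iff_inv_smul_mem]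
    have : (MulAut.conj g)⁻¹ • (g * y * g⁻¹) = y := by
      simp [MulAut.smul_def, mul_assoc]
    rw [this]
  -- all Sylow subgroups contain the same number of conjugates of x
  have cardA : ∀ Q : Sylow p G,
      Nat.card {y : G // IsConj x y ∧ y ∈ (Q : Subgroup G)} =
      Nat.card {y : G // IsConj x y ∧ y ∈ (P : Subgroup G)} := by
    intro Q
    obtain ⟨g, hg⟩ := MulAction.exists_smul_eq G P Q
    refine (Nat.card_congr (Equiv.subtypeEquiv (MulAut.conj g).toEquiv ?_)).symm
    intro y
    have e : (MulAut.conj g).toEquiv y = g * y * g⁻¹ := rfl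
    rw [e]
    constructor
    · rintro ⟨hc, hm⟩
      refine ⟨hc.trans (isConj_iff.2 ⟨g, rfl⟩), ?_⟩
      have := (hmem g P y).2 hm
      rwa [hg] at this
    · rintro ⟨hc, hm⟩
      refine ⟨hc.trans (isConj_iff.2 ⟨g, rfl⟩).symm, ?_⟩
      rw [← hg] at hm
      exact (hmem g P y).1 hm
  -- every conjugate of x lies in some Sylow subgroup
  have hne : ∀ y : G, IsConj x y → Nonempty {Q : Sylow p G // y ∈ (Q : Subgroup G)} := by
    intro y hy
    obtain ⟨g, hg⟩ := isConj_iff.1 hy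
    exact ⟨⟨g • P, hg ▸ (hmem g P x).2 hx⟩⟩
  set N : {y : G // IsConj x y} → ℕ :=
    fun y => Nat.card {Q : Sylow p G // (y : G) ∈ (Q : Subgroup G)} with hNdef
  have hN1 : ∀ y : {y : G // IsConj x y}, 1 ≤ N y := by
    intro y
    haveI := hne y.1 y.2
    exact Nat.one_le_iff_ne_zero.2 Nat.card_pos.ne'
  -- the double counting identity
  have key : Nat.card {y : G // IsConj x y ∧ y ∈ (P : Subgroup G)} * Nat.card (Sylow p G) =
      ∑ y : {y : G // IsConj x y}, N y := by
    have e : (Σ Q : Sylow p G, {y : G // IsConj x y ∧ y ∈ (Q : Subgroup G)}) ≃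
        (Σ y : {y : G // IsConj x y}, {Q : Sylow p G // (y : G) ∈ (Q : Subgroup G)}) :=
      { toFun := fun s => ⟨⟨s.2.1, s.2.2.1⟩, ⟨s.1, s.2.2.2⟩⟩
        invFun := fun s => ⟨s.2.1, s.1.1, s.1.2, s.2.2⟩
        left_inv := fun s => rfl
        right_inv := fun s => rfl }
    have h1 : Nat.card (Σ Q : Sylow p G, {y : G // IsConj x y ∧ y ∈ (Q : Subgroup G)}) =
        ∑ Q : Sylow p G, Nat.card {y : G // IsConj x y ∧ y ∈ (Q : Subgroup G)} := by
      simp only [Nat.card_eq_fintype_card, Fintype.card_sigma]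
    have h2 : Nat.card (Σ y : {y : G // IsConj x y},
        {Q : Sylow p G // (y : G) ∈ (Q : Subgroup G)}) =
        ∑ y : {y : G // IsConj x y}, N y := by
      simp only [hNdef, Nat.card_eq_fintype_card, Fintype.card_sigma]
    calc Nat.card {y : G // IsConj x y ∧ y ∈ (P : Subgroup G)} * Nat.card (Sylow p G)
        = ∑ Q : Sylow p G, Nat.card {y : G // IsConj x y ∧ y ∈ (Q : Subgroup G)} := by
          rw [Finset.sum_congr rfl fun Q _ => cardA Q, Finset.sum_const, Finset.card_univ,
            smul_eq_mul]
          simp only [Nat.card_eq_fintype_card]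
          ring
      _ = ∑ y : {y : G // IsConj x y}, N y := by rw [← h1, Nat.card_congr e, h2]
  have hCsum : Nat.card {y : G // IsConj x y} = ∑ _y : {y : G // IsConj x y}, 1 := by
    rw [Nat.card_eq_fintype_card, Fintype.card, Finset.card_eq_sum_ones]
  -- the inequality
  have hle : Nat.card {y : G // IsConj x y} ≤
      Nat.card {y : G // IsConj x y ∧ y ∈ (P : Subgroup G)} * Nat.card (Sylow p G) := by
    rw [hCsum, key]
    exact Finset.sum_le_sum fun y _ => hN1 y
  -- equality is equivalent to all N y = 1
  have heq_iff : Nat.card {y : G // IsConj x y} =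
      Nat.card {y : G // IsConj x y ∧ y ∈ (P : Subgroup G)} * Nat.card (Sylow p G) ↔
      ∀ y : {y : G // IsConj x y}, N y = 1 := by
    rw [hCsum, key, Finset.sum_eq_sum_iff_of_le fun y _ => hN1 y]
    constructor
    · intro h y; exact (h y (Finset.mem_univ y)).symm
    · intro h y _; exact (h y).symm
  -- N y = 1 for all y iff x lies in a unique Sylow subgroup
  have hiff : (∀ y : {y : G // IsConj x y}, N y = 1) ↔
      ∃! Q : Sylow p G, x ∈ (Q : Subgroup G) := by
    constructor
    · intro h
      have hx1 := h ⟨x, IsConj.refl x⟩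
      rw [hNdef, Nat.card_eq_one_iff_unique] at hx1
      obtain ⟨hsub, ⟨Q, hQ⟩⟩ := hx1
      refine ⟨Q, hQ, fun R hR => ?_⟩
      have := hsub.elim (⟨R, hR⟩ : {Q : Sylow p G // x ∈ (Q : Subgroup G)}) ⟨Q, hQ⟩
      exact congrArg Subtype.val this
    · rintro ⟨Q, hQ, huniq⟩ y
      obtain ⟨g, hg⟩ := isConj_iff.1 y.2
      have e : {R : Sylow p G // (y : G) ∈ (R : Subgroup G)} ≃
          {R : Sylow p G // x ∈ (R : Subgroup G)} := by
        refine Equiv.subtypeEquiv (MulAction.toPerm g⁻¹ : Equiv.Perm (Sylow p G)) ?_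
        intro R
        have h1 : (MulAction.toPerm g⁻¹ : Equiv.Perm (Sylow p G)) R = g⁻¹ • R := rfl
        rw [h1]
        have h2 := hmem g⁻¹ R (y : G)
        have h3 : g⁻¹ * (y : G) * g⁻¹⁻¹ = x := by
          rw [← hg]; group
        rw [h3] at h2
        exact h2.symm
      simp only [hNdef]
      rw [Nat.card_congr e, Nat.card_eq_one_iff_unique]
      refine ⟨⟨fun a b => ?_⟩, ⟨⟨Q, hQ⟩⟩⟩
      have := (huniq a.1 a.2).trans (huniq b.1 b.2).symm
      exact Subtype.ext this
  refine ⟨hle, heq_iff.trans hiff, ?_⟩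
  intro huniq
  have heq := (heq_iff.trans hiff).2 huniq
  have hinj : Nat.card {y : G // ∃ g ∈ (P : Subgroup G), g * x * g⁻¹ = y} ≤
      Nat.card {y : G // IsConj x y ∧ y ∈ (P : Subgroup G)} := by
    refine Nat.card_le_card_of_injective
      (fun s => ⟨s.1, ?_, ?_⟩) ?_
    · obtain ⟨g, _, hg⟩ := s.2; exact isConj_iff.2 ⟨g, hg⟩
    · obtain ⟨g, hgP, hg⟩ := s.2
      rw [← hg]
      exact mul_mem (mul_mem hgP hx) (inv_mem hgP)
    · intro a b hab
      apply Subtype.ext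
      exact congrArg (fun t : {y : G // IsConj x y ∧ y ∈ (P : Subgroup G)} => (t : G)) hab
  calc Nat.card (Sylow p G) * Nat.card {y : G // ∃ g ∈ (P : Subgroup G), g * x * g⁻¹ = y}
      ≤ Nat.card (Sylow p G) * Nat.card {y : G // IsConj x y ∧ y ∈ (P : Subgroup G)} :=
        Nat.mul_le_mul_left _ hinj
    _ = Nat.card {y : G // IsConj x y ∧ y ∈ (P : Subgroup G)} * Nat.card (Sylow p G) :=
        mul_comm _ _
    _ = Nat.card {y : G // IsConj x y} := heq.symm
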